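/- Let ‖·‖ be a norm on ℝ^n that is decomposable at x₀ with support subspace T and sign vector e ∈ T, meaning ∂‖x₀‖ = {z : P_T(z) = e, ‖P_{T⊥}(z)‖* ≤ 1}. Then for every unit vector v ∈ ℝ^n, inf_{g ∈ ∂‖x₀‖} |⟨v, g⟩|/‖g‖₂ ≤ inf_{g ∈ ∂‖x₀‖} |⟨e/‖e‖₂, g⟩|/‖g‖₂; i.e., the normalized sign vector maximizes the minimum absolute correlation with the subdifferential. -/

import Mathlib

open scoped RealInnerProductSpace

private lemma aux_abs_key {a b t E : ℝ} (ht1 : |t| = 1) (htab : t * (a * b) = -|a * b|)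
    (hab : |b| < |a|) (habs : |a| ≤ E) : |a + t * b| ≤ E := by
  have ht2 : t ^ 2 = 1 := by rw [← sq_abs, ht1]; norm_num
  have habm : |a * b| = |a| * |b| := abs_mul a b
  have h1 : (a + t * b) ^ 2 ≤ a ^ 2 := by
    have h2 : (a + t * b) ^ 2 = a ^ 2 + 2 * (t * (a * b)) + t ^ 2 * b ^ 2 := by ring
    rw [h2, htab, ht2]
    nlinarith [sq_abs b, abs_nonneg b, abs_nonneg a, hab.le]
  nlinarith [abs_nonneg (a + t * b), sq_abs (a + t * b), sq_abs a, habs, abs_nonneg a,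
    (abs_nonneg a).trans habs]

/-- For a norm decomposable at `x₀` with support subspace `T` and sign
vector `e ∈ T` (so that the subdifferential is
`S = {z : P_T z = e, ‖P_{T⊥} z‖* ≤ 1}`), the normalized sign vector `e/‖e‖` maximizes the
minimum absolute correlation with the subdifferential: for every unit vector `v`,
`inf_{g ∈ S} |⟨v, g⟩|/‖g‖ ≤ inf_{g ∈ S} |⟨e/‖e‖, g⟩|/‖g‖`. -/
theorem sign_vector_maximizes_correlation {n : ℕ}
    (T : Submodule ℝ (EuclideanSpace ℝ (Fin n)))
    (Nd : EuclideanSpace ℝ (Fin n) → ℝ)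
    (hNd_add : ∀ x y, Nd (x + y) ≤ Nd x + Nd y)
    (hNd_smul : ∀ (a : ℝ) (x : EuclideanSpace ℝ (Fin n)), Nd (a • x) = |a| * Nd x)
    (hNd_pos : ∀ x, x ≠ 0 → 0 < Nd x)
    (e : EuclideanSpace ℝ (Fin n)) (heT : e ∈ T) (he0 : e ≠ 0)
    (S : Set (EuclideanSpace ℝ (Fin n)))
    (hS : S = {z | (T.orthogonalProjection z : EuclideanSpace ℝ (Fin n)) = e ∧
      Nd (z - (T.orthogonalProjection z : EuclideanSpace ℝ (Fin n))) ≤ 1})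
    (hSne : S.Nonempty) (hS0 : (0 : EuclideanSpace ℝ (Fin n)) ∉ S)
    (v : EuclideanSpace ℝ (Fin n)) (hv : ‖v‖ = 1) :
    (⨅ g : S, |⟪v, (g : EuclideanSpace ℝ (Fin n))⟫| / ‖(g : EuclideanSpace ℝ (Fin n))‖)
      ≤ ⨅ g : S, |⟪‖e‖⁻¹ • e, (g : EuclideanSpace ℝ (Fin n))⟫|
          / ‖(g : EuclideanSpace ℝ (Fin n))‖ := by
  have hne : Nonempty S := hSne.to_subtype
  have hNd0 : Nd 0 = 0 := by
    have := hNd_smul 0 0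
    simpa using this
  have hNdnn : ∀ x, 0 ≤ Nd x := by
    intro x
    rcases eq_or_ne x 0 with h | h
    · simp [h, hNd0]
    · exact (hNd_pos x h).le
  have hbdd : BddBelow (Set.range fun g : S =>
      |⟪v, (g : EuclideanSpace ℝ (Fin n))⟫| / ‖(g : EuclideanSpace ℝ (Fin n))‖) := by
    refine ⟨0, ?_⟩
    rintro x ⟨g, rfl⟩
    positivity
  refine le_ciInf ?_
  rintro ⟨g, hg⟩
  have hgmem : (T.orthogonalProjection g : EuclideanSpace ℝ (Fin n)) = e ∧
      Nd (g - (T.orthogonalProjection g : EuclideanSpace ℝ (Fin n))) ≤ 1 := by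
    rw [hS] at hg; exact hg
  set w : EuclideanSpace ℝ (Fin n) := g - e with hw
  have hwT : w ∈ Tᗮ := by
    have := Submodule.sub_starProjection_mem_orthogonal (K := T) g
    rwa [Submodule.starProjection_apply, hgmem.1] at this
  have hNdw : Nd w ≤ 1 := by
    have := hgmem.2
    rwa [hgmem.1] at this
  have hew : ⟪e, w⟫ = 0 := (Submodule.mem_orthogonal T w).mp hwT e heT
  have hvwinner : ⟪v, g⟫ = ⟪v, e⟫ + ⟪v, w⟫ := by
    have : g = e + w := by simp [hw]
    rw [this, inner_add_right]
  have hg0 : g ≠ 0 := fun h => hS0 (h ▸ hg)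
  have hgpos : 0 < ‖g‖ := norm_pos_iff.mpr hg0
  have hepos : 0 < ‖e‖ := norm_pos_iff.mpr he0
  -- RHS value at g is ‖e‖ / ‖g‖
  have hrhs : |⟪‖e‖⁻¹ • e, g⟫| / ‖g‖ = ‖e‖ / ‖g‖ := by
    have heg : ⟪e, g⟫ = ‖e‖ ^ 2 := by
      have : g = e + w := by simp [hw]
      rw [this, inner_add_right, hew, real_inner_self_eq_norm_sq]
      ring
    rw [real_inner_smul_left, heg]
    rw [abs_of_nonneg (by positivity)]
    field_simp
  rw [hrhs]
  -- norm of g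
  have hgsq : ‖g‖ ^ 2 = ‖e‖ ^ 2 + ‖w‖ ^ 2 := by
    have : g = e + w := by simp [hw]
    rw [this, norm_add_sq_real, hew]
    ring
  set a := ⟪v, e⟫ with ha
  set b := ⟪v, w⟫ with hb
  have habs : |a| ≤ ‖e‖ := by
    have := abs_real_inner_le_norm v e
    rwa [hv, one_mul] at this
  -- membership lemma for e + t • w
  have hmem : ∀ t : ℝ, |t| ≤ 1 → (e + t • w) ∈ S := by
    intro t ht
    rw [hS]
    have hP : (T.orthogonalProjection (e + t • w) : EuclideanSpace ℝ (Fin n)) = e := by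
      have h1 : T.orthogonalProjection w = 0 :=
        Submodule.orthogonalProjectionOnto_apply_of_mem_orthogonal hwT
      rw [map_add, map_smul, h1, smul_zero, add_zero]
      exact Submodule.starProjection_eq_self_iff.mpr heT
    refine ⟨hP, ?_⟩
    rw [hP]
    have : e + t • w - e = t • w := by abel
    rw [this, hNd_smul]
    calc |t| * Nd w ≤ 1 * 1 := by
          apply mul_le_mul ht hNdw (hNdnn w) zero_le_one
      _ = 1 := one_mul 1
  -- norm of e + t•w
  have hnsq : ∀ t : ℝ, ‖e + t • w‖ ^ 2 = ‖e‖ ^ 2 + t ^ 2 * ‖w‖ ^ 2 := by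
    intro t
    rw [norm_add_sq_real, real_inner_smul_right, hew, norm_smul]
    simp [mul_pow, sq_abs]
  have hinner : ∀ t : ℝ, ⟪v, e + t • w⟫ = a + t * b := by
    intro t
    rw [inner_add_right, real_inner_smul_right]
  rcases le_or_gt |a| |b| with hab | hab
  · -- can kill the numerator
    rcases eq_or_ne b 0 with hb0 | hb0
    · have ha0 : a = 0 := by
        have : |a| ≤ 0 := by simpa [hb0] using hab
        simpa using le_antisymm this (abs_nonneg a)
      refine le_trans (ciInf_le hbdd ⟨g, hg⟩) ?_
      simp only [hvwinner, ← ha, ← hb, ha0, hb0]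
      simp
      positivity
    · set t : ℝ := -a / b with htdef
      have ht1 : |t| ≤ 1 := by
        rw [htdef, abs_div, abs_neg]
        exact div_le_one_of_le₀ hab (abs_nonneg b)
      refine le_trans (ciInf_le hbdd ⟨e + t • w, hmem t ht1⟩) ?_
      have : ⟪v, e + t • w⟫ = 0 := by
        rw [hinner t, htdef]
        field_simp
        ring
      rw [this]
      simp
      positivity
  · -- |b| < |a| : use t = ±1 to cancel
    set t : ℝ := if 0 ≤ a * b then -1 else 1 with htdef
    have ht1 : |t| = 1 := by
      rw [htdef]; split <;> simp
    have htab : t * (a * b) = -|a * b| := by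
      rw [htdef]; split <;> rename_i h
      · rw [abs_of_nonneg h]; ring
      · rw [abs_of_neg (lt_of_not_ge h)]; ring
    clear_value a b
    refine le_trans (ciInf_le hbdd ⟨e + t • w, hmem t ht1.le⟩) ?_
    clear_value t
    have hnorm : ‖e + t • w‖ = ‖g‖ := by
      have h1 : ‖e + t • w‖ ^ 2 = ‖g‖ ^ 2 := by
        rw [hnsq t, hgsq]
        have ht2 : t ^ 2 = 1 := by rw [← sq_abs, ht1]; norm_num
        rw [ht2]; ring
      exact (sq_eq_sq₀ (norm_nonneg _) (norm_nonneg _)).mp h1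
    rw [hinner t, hnorm]
    clear_value w
    exact (div_le_div_iff_of_pos_right hgpos).mpr (aux_abs_key ht1 htab hab habs)
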